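/- Let H be a symmetric numerical semigroup with multiplicity a and conductor c, A = k[[H]], 𝔪 its maximal ideal, q > 0 an integer satisfying: (C1) t^n ∈ 𝔪^q for all integers n ≥ c, and (C2) every n ∈ H with t^n ∉ 𝔪^{q−1} satisfies n < a(q−1). Let 0 < s ∈ H, Q = (t^s), I = Q : 𝔪^q. Then 𝔪^q I = 𝔪^q Q and Q ∩ I² = QI. -/

import Mathlib

set_option maxHeartbeats 1000000
set_option synthInstance.maxHeartbeats 1000000

open PowerSeries

/-- The numerical semigroup ring `k[[H]]`: power series supported on `H`. -/
noncomputable def ssr (k : Type) [Field k] (H : AddSubmonoid ℕ) :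
    Subalgebra k (PowerSeries k) where
  carrier := {f | ∀ n : ℕ, n ∉ H → PowerSeries.coeff n f = 0}
  mul_mem' := by
    intro f g hf hg n hn
    rw [Set.mem_setOf_eq] at hf hg
    rw [PowerSeries.coeff_mul]
    apply Finset.sum_eq_zero
    rintro ⟨i, j⟩ hij
    replace hij : i + j = n := by simpa using hij
    by_cases hi : i ∈ H
    · have hj : j ∉ H := fun hj => hn (hij ▸ H.add_mem hi hj)
      rw [hg j hj, mul_zero]
    · rw [hf i hi, zero_mul]
  add_mem' := by
    intro f g hf hg n hn
    rw [Set.mem_setOf_eq] at hf hg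
    rw [map_add, hf n hn, hg n hn, add_zero]
  one_mem' := by
    intro n hn
    have h0 : n ≠ 0 := fun h => hn (by rw [h]; exact H.zero_mem)
    simp [PowerSeries.coeff_one, h0]
  zero_mem' := by
    intro n _
    simp
  algebraMap_mem' := by
    intro r n hn
    have h0 : n ≠ 0 := fun h => hn (by rw [h]; exact H.zero_mem)
    simp [PowerSeries.algebraMap_apply, PowerSeries.coeff_C, h0]

/-- The monomial `t^n` as an element of `k[[H]]`, for `n ∈ H`. -/
noncomputable def tp (k : Type) [Field k] (H : AddSubmonoid ℕ) (n : ℕ) (hn : n ∈ H) :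
    ssr k H :=
  ⟨PowerSeries.X ^ n, by
    intro m hm
    rw [PowerSeries.coeff_X_pow]
    exact if_neg (fun h => hm (by rw [h]; exact hn))⟩

/-- The maximal ideal of `k[[H]]`, generated by the monomials `t^n`, `0 < n ∈ H`. -/
noncomputable def mIdeal (k : Type) [Field k] (H : AddSubmonoid ℕ) : Ideal (ssr k H) :=
  Ideal.span {x | ∃ n : ℕ, ∃ hn : n ∈ H, 0 < n ∧ x = tp k H n hn}

section Aux
variable {k : Type} [Field k] {H : AddSubmonoid ℕ}

/-- value sets of powers of the maximal ideal -/
def Vset (H : AddSubmonoid ℕ) : ℕ → Set ℕ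
  | 0 => H
  | j+1 => {n | ∃ p w, p ∈ H ∧ p ≠ 0 ∧ w ∈ Vset H j ∧ n = p + w}

lemma Vset_subset (H : AddSubmonoid ℕ) : ∀ j, ∀ n ∈ Vset H j, n ∈ H := by
  intro j
  induction j with
  | zero => exact fun n hn => hn
  | succ j ih =>
    rintro n ⟨p, w, hp, -, hw, rfl⟩
    exact H.add_mem hp (ih w hw)

lemma Vset_add_mem (H : AddSubmonoid ℕ) : ∀ j, ∀ n ∈ Vset H j, ∀ h ∈ H, n + h ∈ Vset H j := by
  intro j
  induction j with
  | zero => exact fun n hn h hh => H.add_mem hn hh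
  | succ j ih =>
    rintro n ⟨p, w, hp, hp0, hw, rfl⟩ h hh
    exact ⟨p, w + h, hp, hp0, ih w hw h hh, by ring⟩

lemma Vset_ge (H : AddSubmonoid ℕ) (a : ℕ) (hamin : ∀ n ∈ H, n ≠ 0 → a ≤ n) :
    ∀ j, ∀ n ∈ Vset H j, a * j ≤ n := by
  intro j
  induction j with
  | zero => simp
  | succ j ih =>
    rintro n ⟨p, w, hp, hp0, hw, rfl⟩
    have h1 := hamin p hp hp0
    have h2 := ih w hw
    have : a * (j + 1) = a * j + a := by ring
    omega

/-- support of a product -/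
lemma mul_supp {S1 S2 : Set ℕ} {f g : PowerSeries k}
    (hf : ∀ i, PowerSeries.coeff i f ≠ 0 → i ∈ S1)
    (hg : ∀ j, PowerSeries.coeff j g ≠ 0 → j ∈ S2) :
    ∀ n, PowerSeries.coeff n (f * g) ≠ 0 → ∃ i ∈ S1, ∃ j ∈ S2, n = i + j := by
  intro n hn
  rw [PowerSeries.coeff_mul] at hn
  obtain ⟨⟨i, j⟩, hij, hne⟩ := Finset.exists_ne_zero_of_sum_ne_zero hn
  rw [Finset.HasAntidiagonal.mem_antidiagonal] at hij
  refine ⟨i, hf i fun h => hne (by rw [h, zero_mul]), j,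
    hg j fun h => hne (by rw [h, mul_zero]), hij.symm⟩

lemma tp_mul (m n : ℕ) (hm : m ∈ H) (hn : n ∈ H) :
    tp k H (m + n) (H.add_mem hm hn) = tp k H m hm * tp k H n hn := by
  apply Subtype.ext
  show (X : PowerSeries k) ^ (m + n) = X ^ m * X ^ n
  rw [pow_add]

lemma tp_mul' (u m n : ℕ) (hu : u ∈ H) (hm : m ∈ H) (hn : n ∈ H) (h : u = m + n) :
    tp k H u hu = tp k H m hm * tp k H n hn := by
  apply Subtype.ext
  show (X : PowerSeries k) ^ u = X ^ m * X ^ n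
  rw [h, pow_add]

lemma supp_X_pow (u : ℕ) : ∀ i, PowerSeries.coeff i ((X : PowerSeries k) ^ u) ≠ 0 →
    i ∈ ({u} : Set ℕ) := by
  intro i hi
  rw [PowerSeries.coeff_X_pow] at hi
  by_contra h
  exact hi (if_neg (fun he => h (by simp [he])))

lemma coeff_tp_self (n : ℕ) (hn : n ∈ H) :
    PowerSeries.coeff n ((tp k H n hn : ssr k H) : PowerSeries k) = 1 := by
  show PowerSeries.coeff n (X ^ n) = 1
  rw [PowerSeries.coeff_X_pow, if_pos rfl]

lemma m_supp {x : ssr k H} (hx : x ∈ mIdeal k H) :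
    ∀ n, PowerSeries.coeff n (x : PowerSeries k) ≠ 0 → n ∈ Vset H 1 := by
  refine Submodule.span_induction ?_ ?_ ?_ ?_ hx
  · rintro y ⟨n, hn, hn0, rfl⟩ m hm
    by_contra hmem
    apply hm
    show PowerSeries.coeff m (X ^ n) = 0
    rw [PowerSeries.coeff_X_pow]
    refine if_neg (fun h => hmem ⟨n, 0, hn, by omega, H.zero_mem, by omega⟩)
  · intro n hn
    simp at hn
  · intro y z _ _ hy hz n hn
    have : PowerSeries.coeff n ((y : PowerSeries k) + (z : PowerSeries k)) ≠ 0 := hn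
    rw [map_add] at this
    by_cases h1 : PowerSeries.coeff n (y : PowerSeries k) ≠ 0
    · exact hy n h1
    · exact hz n (by push_neg at h1; intro h2; exact this (by rw [h1, h2, add_zero]))
  · intro r y _ hy n hn
    have hcoe : (((r • y : ssr k H)) : PowerSeries k) = (r : PowerSeries k) * y := rfl
    rw [hcoe] at hn
    obtain ⟨i, hi, j, hj, rfl⟩ := mul_supp (fun i hi => by_contra fun hm => hi (r.2 i hm)) hy n hn
    obtain ⟨p, w, hp, hp0, hw, rfl⟩ := hj
    exact ⟨p, w + i, hp, hp0, H.add_mem hw hi, by omega⟩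

lemma mpow_supp : ∀ j, ∀ x ∈ mIdeal k H ^ j,
    ∀ n, PowerSeries.coeff n (x : PowerSeries k) ≠ 0 → n ∈ Vset H j := by
  intro j
  induction j with
  | zero =>
    intro x _ n hn
    exact by_contra fun hm => hn (x.2 n hm)
  | succ j ih =>
    intro x hx
    rw [pow_succ] at hx
    refine Submodule.mul_induction_on hx ?_ ?_
    · intro y hy z hz n hn
      have h := mul_supp (ih y hy) (m_supp hz) n hn
      obtain ⟨i, hi, j', hj', rfl⟩ := h
      obtain ⟨p, w, hp, hp0, hw, rfl⟩ : j' ∈ Vset H 1 := hj'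
      exact ⟨p, i + w, hp, hp0, Vset_add_mem H j i hi w (Vset_subset H 0 w hw), by omega⟩
    · intro y z hy hz n hn
      have : PowerSeries.coeff n ((y : PowerSeries k) + (z : PowerSeries k)) ≠ 0 := hn
      rw [map_add] at this
      by_cases h1 : PowerSeries.coeff n (y : PowerSeries k) ≠ 0
      · exact hy n h1
      · exact hz n (by push_neg at h1; intro h2; exact this (by rw [h1, h2, add_zero]))

lemma tp_mem_mpow : ∀ j, ∀ u (hu : u ∈ H), u ∈ Vset H j → tp k H u hu ∈ mIdeal k H ^ j := by
  intro j
  induction j with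
  | zero => intro u hu _; rw [pow_zero, Ideal.one_eq_top]; exact Submodule.mem_top
  | succ j ih =>
    rintro u hu ⟨p, w, hp, hp0, hw, rfl⟩
    rw [pow_succ]
    have : tp k H (p + w) hu = tp k H w (Vset_subset H j w hw) * tp k H p hp := by
      rw [← tp_mul]
      congr 1
      omega
    rw [this]
    refine Ideal.mul_mem_mul (ih w _ hw) ?_
    exact Ideal.subset_span ⟨p, hp, Nat.pos_of_ne_zero hp0, rfl⟩

end Aux

section Master
variable {k : Type} [Field k] {H : AddSubmonoid ℕ}

lemma mem_of_supp (c : ℕ) (hc : ∀ n, c ≤ n → n ∈ H)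
    (J : Ideal (ssr k H)) (S : Set ℕ) (hSH : ∀ u ∈ S, u ∈ H)
    (hmono : ∀ u (hu : u ∈ S), tp k H u (hSH u hu) ∈ J)
    (M : ℕ) (hM : M ∈ H) (htail : ∀ z : ssr k H, tp k H M hM * z ∈ J)
    (x : ssr k H) (hx : ∀ n, PowerSeries.coeff n (x : PowerSeries k) ≠ 0 → n ∈ S) :
    x ∈ J := by
  classical
  set N := M + c with hN
  set P : ssr k H := ∑ n ∈ Finset.range N,
    PowerSeries.coeff n (x : PowerSeries k) •
      (if h : n ∈ H then tp k H n h else 0) with hP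
  have hPcoeff : ∀ m : ℕ, PowerSeries.coeff m (P : PowerSeries k) =
      if m < N ∧ m ∈ H then PowerSeries.coeff m (x : PowerSeries k) else 0 := by
    intro m
    have : ((P : ssr k H) : PowerSeries k) = ∑ n ∈ Finset.range N,
        PowerSeries.coeff n (x : PowerSeries k) •
          ((if h : n ∈ H then tp k H n h else 0 : ssr k H) : PowerSeries k) := by
      rw [hP]
      push_cast
      rfl
    rw [this, map_sum]
    have hterm : ∀ n ∈ Finset.range N,
        PowerSeries.coeff m (PowerSeries.coeff n (x : PowerSeries k) •
          ((if h : n ∈ H then tp k H n h else 0 : ssr k H) : PowerSeries k)) =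
        if n = m ∧ m ∈ H then PowerSeries.coeff m (x : PowerSeries k) else 0 := by
      intro n _
      rw [map_smul]
      by_cases hnH : n ∈ H
      · rw [dif_pos hnH]
        show PowerSeries.coeff n (x : PowerSeries k) • PowerSeries.coeff m ((X : PowerSeries k) ^ n) = _
        rw [PowerSeries.coeff_X_pow]
        by_cases hnm : m = n
        · subst hnm
          simp [hnH]
        · rw [if_neg hnm, smul_zero, if_neg (by tauto)]
      · rw [dif_neg hnH]
        have : ((0 : ssr k H) : PowerSeries k) = 0 := rfl
        rw [this, map_zero, smul_zero]
        by_cases hnm : n = m ∧ m ∈ H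
        · exact absurd (hnm.1 ▸ hnm.2) hnH
        · rw [if_neg hnm]
    rw [Finset.sum_congr rfl hterm]
    by_cases hm : m < N ∧ m ∈ H
    · rw [Finset.sum_eq_single m]
      · rw [if_pos (⟨rfl, hm.2⟩ : m = m ∧ m ∈ H), if_pos hm]
      · intro b _ hbm; rw [if_neg (by tauto)]
      · intro hmN; exact absurd (Finset.mem_range.mpr hm.1) hmN
    · rw [if_neg hm]
      apply Finset.sum_eq_zero
      intro b hb
      rw [Finset.mem_range] at hb
      by_cases hbm : b = m ∧ m ∈ H
      · exact absurd ⟨hbm.1 ▸ hb, hbm.2⟩ hm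
      · rw [if_neg hbm]
  have hPJ : P ∈ J := by
    apply Ideal.sum_mem
    intro n _
    by_cases hc0 : PowerSeries.coeff n (x : PowerSeries k) = 0
    · rw [hc0, zero_smul]; exact J.zero_mem
    · have hnS := hx n hc0
      rw [dif_pos (hSH n hnS)]
      exact Submodule.smul_of_tower_mem J _ (hmono n hnS)
  have hylow : ∀ m < N, PowerSeries.coeff m ((x - P : ssr k H) : PowerSeries k) = 0 := by
    intro m hm
    have : ((x - P : ssr k H) : PowerSeries k) = (x : PowerSeries k) - P := rfl
    rw [this, map_sub, hPcoeff]
    by_cases hmH : m ∈ H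
    · rw [if_pos ⟨hm, hmH⟩, sub_self]
    · rw [if_neg (by tauto), x.2 m hmH, sub_zero]
  -- tail is divisible by X^M
  obtain ⟨z, hz⟩ : (X : PowerSeries k) ^ M ∣ ((x - P : ssr k H) : PowerSeries k) :=
    PowerSeries.X_pow_dvd_iff.mpr (fun m hm => hylow m (by omega))
  have hzcoeff : ∀ n, PowerSeries.coeff n z = PowerSeries.coeff (n + M)
      ((x - P : ssr k H) : PowerSeries k) := by
    intro n
    rw [hz, PowerSeries.coeff_X_pow_mul]
  have hzmem : z ∈ ssr k H := by
    intro n hnH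
    rw [hzcoeff]
    apply hylow
    have : n < c := by by_contra hcn; exact hnH (hc n (by omega))
    omega
  have hxPJ : x - P ∈ J := by
    have : (x - P : ssr k H) = tp k H M hM * ⟨z, hzmem⟩ := by
      apply Subtype.ext
      exact hz
    rw [this]
    exact htail _
  have := J.add_mem hxPJ hPJ
  simpa using this

end Master

/-- Theorem 2.1 (1): under (C1) and (C2), `𝔪^q I = 𝔪^q Q` and `Q ∩ I² = QI`. -/
theorem stmt9 (k : Type) [Field k] (H : AddSubmonoid ℕ) (hfin : (Set.univ \ (H : Set ℕ)).Finite)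
    (a : ℕ) (haH : a ∈ H) (ha0 : a ≠ 0) (hamin : ∀ n ∈ H, n ≠ 0 → a ≤ n)
    (c : ℕ) (hc : ∀ n : ℕ, c ≤ n → n ∈ H) (hcmin : ∀ m : ℕ, (∀ n : ℕ, m ≤ n → n ∈ H) → c ≤ m)
    (hsym : ∀ n : ℕ, n ≤ c - 1 → (n ∈ H ↔ (c - 1 - n) ∉ H))
    (q : ℕ) (hq : 0 < q)
    (hC1 : ∀ n : ℕ, ∀ hn : c ≤ n, tp k H n (hc n hn) ∈ mIdeal k H ^ q)
    (hC2 : ∀ (n : ℕ) (hn : n ∈ H), tp k H n hn ∉ mIdeal k H ^ (q - 1) → n < a * (q - 1))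
    (s : ℕ) (hs : s ∈ H) (hs0 : 0 < s)
    (Q : Ideal (ssr k H)) (hQ : Q = Ideal.span {tp k H s hs})
    (I : Ideal (ssr k H)) (hI : I = Submodule.colon Q ((mIdeal k H ^ q : Ideal (ssr k H)) : Set (ssr k H))) :
    mIdeal k H ^ q * I = mIdeal k H ^ q * Q ∧ Q ⊓ I ^ 2 = Q * I := by
  classical
  obtain ⟨q', rfl⟩ : ∃ q', q = q' + 1 := ⟨q - 1, by omega⟩
  simp only [Nat.add_sub_cancel] at hC2
  -- set versions of C1 and C2
  have sC1 : ∀ n, c ≤ n → n ∈ Vset H (q' + 1) := by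
    intro n hn
    refine mpow_supp (q' + 1) _ (hC1 n hn) n ?_
    rw [coeff_tp_self]
    exact one_ne_zero
  have sC2 : ∀ n, n ∈ H → n ∉ Vset H q' → n < a * q' := by
    intro n hn hv
    refine hC2 n hn (fun hmem => hv ?_)
    refine mpow_supp q' _ hmem n ?_
    rw [coeff_tp_self]
    exact one_ne_zero
  -- c ≥ 1 and c - 1 is a gap
  have hc1 : 1 ≤ c := by
    by_contra h
    have h0 : (0 : ℕ) ∈ Vset H (q' + 1) := sC1 0 (by omega)
    have h1 := Vset_ge H a hamin (q' + 1) 0 h0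
    have : a * (q' + 1) ≠ 0 := by positivity
    omega
  have hcg : c - 1 ∉ H := by
    intro hmem
    have : c ≤ c - 1 := hcmin (c - 1) (fun n hn => by
      rcases Nat.eq_or_lt_of_le hn with h | h
      · exact h ▸ hmem
      · exact hc n (by omega))
    omega
  -- Lemma X
  have lemX : ∀ n, n ∈ H → n ∉ Vset H (q' + 1) → ∀ v ∈ Vset H (q' + 1),
      (c - 1 - n) + v ∈ Vset H (q' + 1) := by
    intro n hn hnV v hv
    have hnc : n ≤ c - 1 := by
      by_contra h
      exact hnV (sC1 n (by omega))
    obtain ⟨p, w, hp, hp0, hw, rfl⟩ := hv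
    by_cases hmp : (c - 1 - n) + p ∈ H
    · exact ⟨(c - 1 - n) + p, w, hmp, by omega, hw, by omega⟩
    · -- (c-1-n)+p is a gap, use symmetry
      have hlt : (c - 1 - n) + p ≤ c - 1 := by
        by_contra h
        exact hmp (hc _ (by omega))
      have hr : c - 1 - ((c - 1 - n) + p) ∈ H := by
        by_contra hr'
        exact hmp ((hsym _ hlt).mpr hr')
      have hrp : (c - 1 - ((c - 1 - n) + p)) + p = n := by omega
      have hrV : c - 1 - ((c - 1 - n) + p) ∉ Vset H q' := by
        intro hmem
        exact hnV ⟨p, _, hp, hp0, hmem, by omega⟩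
      have h1 : c - 1 - ((c - 1 - n) + p) < a * q' := sC2 _ hr hrV
      have h2 : a * q' ≤ w := Vset_ge H a hamin q' w hw
      exact sC1 _ (by omega)
  -- the value set F of the ideal I
  set F : Set ℕ := {n | n ∈ H ∧ ∀ u ∈ Vset H (q' + 1), ∃ h ∈ H, n + u = s + h} with hFdef
  have hFH : ∀ n ∈ F, n ∈ H := fun n hn => hn.1
  -- Lemma 1 : F + V ⊆ s + V
  have lem1 : ∀ f ∈ F, ∀ v ∈ Vset H (q' + 1), ∃ u ∈ Vset H (q' + 1), f + v = s + u := by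
    intro f hf v hv
    obtain ⟨n, hn, hfv⟩ := hf.2 v hv
    by_cases hnV : n ∈ Vset H (q' + 1)
    · exact ⟨n, hnV, hfv⟩
    · exfalso
      have hu : (c - 1 - n) + v ∈ Vset H (q' + 1) := lemX n hn hnV v hv
      obtain ⟨h', hh', heq⟩ := hf.2 _ hu
      have hnc : n ≤ c - 1 := by
        by_contra h
        exact hnV (sC1 n (by omega))
      -- f + ((c-1-n) + v) = s + h' and f + v = s + n  ⇒ h' = c - 1
      have : h' = c - 1 := by omega
      exact hcg (this ▸ hh')
  -- Lemma 2
  have lem2 : ∀ x : ℕ, (∃ h ∈ H, x = s + h) → (∃ f ∈ F, ∃ f' ∈ F, x = f + f') →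
      ∃ f ∈ F, x = s + f := by
    rintro x ⟨h, hh, rfl⟩ ⟨f, hf, f', hf', hx⟩
    refine ⟨h, ⟨hh, ?_⟩, rfl⟩
    intro u hu
    obtain ⟨u', hu', heq'⟩ := lem1 f' hf' u hu
    obtain ⟨h'', hh'', heq''⟩ := hf.2 u' hu'
    exact ⟨h'', hh'', by omega⟩
  -- ring-level characterizations
  have htpsQ : tp k H s hs ∈ Q := by
    rw [hQ]; exact Ideal.mem_span_singleton_self _
  have Qsupp : ∀ x ∈ Q, ∀ n : ℕ, PowerSeries.coeff n (x : PowerSeries k) ≠ 0 →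
      ∃ h ∈ H, n = s + h := by
    intro x hx n hn
    rw [hQ, Ideal.mem_span_singleton] at hx
    obtain ⟨y, rfl⟩ := hx
    have hcoe : ((tp k H s hs * y : ssr k H) : PowerSeries k) =
        (X : PowerSeries k) ^ s * (y : PowerSeries k) := rfl
    rw [hcoe] at hn
    obtain ⟨i, hi, j, hj, rfl⟩ := mul_supp (supp_X_pow s)
      (fun j hj => by by_contra hm; exact hj (y.2 j hm)) n hn
    rw [Set.mem_singleton_iff] at hi
    subst hi
    exact ⟨j, hj, rfl⟩
  have Qrev : ∀ x : ssr k H,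
      (∀ n, PowerSeries.coeff n (x : PowerSeries k) ≠ 0 → ∃ h ∈ H, n = s + h) → x ∈ Q := by
    intro x hx
    refine mem_of_supp c hc Q {n | ∃ h ∈ H, n = s + h}
      (by rintro u ⟨h, hh, rfl⟩; exact H.add_mem hs hh) ?_ s hs
      (fun z => Ideal.mul_mem_right z Q htpsQ) x hx
    rintro u ⟨h, hh, rfl⟩
    rw [tp_mul' (s + h) s h _ hs hh rfl]
    exact Ideal.mul_mem_right _ Q htpsQ
  have Isupp : ∀ x ∈ I, ∀ n, PowerSeries.coeff n (x : PowerSeries k) ≠ 0 → n ∈ F := by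
    intro x hx n hn
    refine ⟨by_contra fun h => hn (x.2 n h), ?_⟩
    intro u hu
    have htpu : tp k H u (Vset_subset H _ u hu) ∈ mIdeal k H ^ (q' + 1) :=
      tp_mem_mpow _ u _ hu
    rw [hI] at hx
    have hxQ : x * tp k H u (Vset_subset H _ u hu) ∈ Q := by
      have := Submodule.mem_colon.mp hx _ htpu
      rwa [smul_eq_mul] at this
    have hcoeff : PowerSeries.coeff (n + u)
        ((x * tp k H u (Vset_subset H _ u hu) : ssr k H) : PowerSeries k) ≠ 0 := by
      have hcoe : ((x * tp k H u (Vset_subset H _ u hu) : ssr k H) : PowerSeries k) =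
          (X : PowerSeries k) ^ u * (x : PowerSeries k) := by
        show (x : PowerSeries k) * (X : PowerSeries k) ^ u = _
        ring
      rw [hcoe, PowerSeries.coeff_X_pow_mul]
      exact hn
    obtain ⟨h, hh, heq⟩ := Qsupp _ hxQ (n + u) hcoeff
    exact ⟨h, hh, heq⟩
  have Irev : ∀ x : ssr k H,
      (∀ n, PowerSeries.coeff n (x : PowerSeries k) ≠ 0 → n ∈ F) → x ∈ I := by
    intro x hx
    rw [hI, Submodule.mem_colon]
    intro p hp
    rw [smul_eq_mul]
    apply Qrev
    intro n hn
    have hcoe : ((x * p : ssr k H) : PowerSeries k) =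
        (x : PowerSeries k) * (p : PowerSeries k) := rfl
    rw [hcoe] at hn
    obtain ⟨i, hi, j, hj, rfl⟩ := mul_supp hx (mpow_supp (q' + 1) p hp) n hn
    obtain ⟨h, hh, heq⟩ := hi.2 j hj
    exact ⟨h, hh, heq⟩
  have QleI : Q ≤ I := by
    intro x hx
    rw [hI, Submodule.mem_colon]
    intro p hp
    rw [smul_eq_mul]
    exact Ideal.mul_mem_right p Q hx
  have hsF : ∀ h ∈ H, s + h ∈ F := by
    intro h hh
    refine ⟨H.add_mem hs hh, fun u hu => ⟨h + u, H.add_mem hh (Vset_subset H _ u hu), by omega⟩⟩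
  constructor
  · -- 𝔪^q I = 𝔪^q Q
    refine le_antisymm ?_ (Ideal.mul_mono_right QleI)
    intro x hx
    have hsupp : ∀ n, PowerSeries.coeff n (x : PowerSeries k) ≠ 0 →
        ∃ u ∈ Vset H (q' + 1), n = s + u := by
      refine Submodule.mul_induction_on hx ?_ ?_
      · intro y hy z hz n hn
        have hcoe : ((y * z : ssr k H) : PowerSeries k) =
            (y : PowerSeries k) * (z : PowerSeries k) := rfl
        rw [hcoe] at hn
        obtain ⟨i, hi, j, hj, rfl⟩ := mul_supp (mpow_supp (q' + 1) y hy) (Isupp z hz) n hn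
        obtain ⟨u, hu, heq⟩ := lem1 j hj i hi
        exact ⟨u, hu, by omega⟩
      · intro y z hy hz n hn
        have hadd : PowerSeries.coeff n ((y : PowerSeries k) + (z : PowerSeries k)) ≠ 0 := hn
        rw [map_add] at hadd
        by_cases h1 : PowerSeries.coeff n (y : PowerSeries k) ≠ 0
        · exact hy n h1
        · exact hz n (by push_neg at h1; intro h2; exact hadd (by rw [h1, h2, add_zero]))
    refine mem_of_supp c hc _ {n | ∃ u ∈ Vset H (q' + 1), n = s + u}
      (by rintro u ⟨u', hu', rfl⟩; exact H.add_mem hs (Vset_subset H _ u' hu')) ?_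
      (c + s) (H.add_mem (hc c le_rfl) hs) ?_ x hsupp
    · rintro u ⟨u', hu', rfl⟩
      rw [tp_mul' (s + u') u' s _ (Vset_subset H _ u' hu') hs (by omega)]
      exact Ideal.mul_mem_mul (tp_mem_mpow _ u' _ hu') htpsQ
    · intro z
      have heq : tp k H (c + s) (H.add_mem (hc c le_rfl) hs) * z =
          tp k H c (hc c le_rfl) * (tp k H s hs * z) := by
        rw [tp_mul' (c + s) c s _ (hc c le_rfl) hs rfl, mul_assoc]
      rw [heq]
      exact Ideal.mul_mem_mul (hC1 c le_rfl) (Ideal.mul_mem_right z Q htpsQ)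
  · -- Q ⊓ I² = Q I
    refine le_antisymm ?_
      (le_inf (Ideal.mul_le_inf.trans inf_le_left) (by rw [sq]; exact Ideal.mul_mono QleI le_rfl))
    intro x hx
    obtain ⟨hxQ, hxI2⟩ := hx
    rw [sq] at hxI2
    have hsupp2 : ∀ n, PowerSeries.coeff n (x : PowerSeries k) ≠ 0 →
        ∃ f ∈ F, ∃ f' ∈ F, n = f + f' := by
      refine Submodule.mul_induction_on hxI2 ?_ ?_
      · intro y hy z hz n hn
        have hcoe : ((y * z : ssr k H) : PowerSeries k) =
            (y : PowerSeries k) * (z : PowerSeries k) := rfl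
        rw [hcoe] at hn
        exact mul_supp (Isupp y hy) (Isupp z hz) n hn
      · intro y z hy hz n hn
        have hadd : PowerSeries.coeff n ((y : PowerSeries k) + (z : PowerSeries k)) ≠ 0 := hn
        rw [map_add] at hadd
        by_cases h1 : PowerSeries.coeff n (y : PowerSeries k) ≠ 0
        · exact hy n h1
        · exact hz n (by push_neg at h1; intro h2; exact hadd (by rw [h1, h2, add_zero]))
    have hsupp : ∀ n, PowerSeries.coeff n (x : PowerSeries k) ≠ 0 → ∃ f ∈ F, n = s + f :=
      fun n hn => lem2 n (Qsupp x hxQ n hn) (hsupp2 n hn)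
    refine mem_of_supp c hc _ {n | ∃ f ∈ F, n = s + f}
      (by rintro u ⟨f, hf, rfl⟩; exact H.add_mem hs (hFH f hf)) ?_
      (s + s) (H.add_mem hs hs) ?_ x hsupp
    · rintro u ⟨f, hf, rfl⟩
      have htpf : tp k H f (hFH f hf) ∈ I := by
        refine Irev _ (fun n hn => ?_)
        have hmem : n ∈ ({f} : Set ℕ) := supp_X_pow f n hn
        rw [Set.mem_singleton_iff] at hmem
        exact hmem ▸ hf
      rw [tp_mul' (s + f) s f _ hs (hFH f hf) rfl]
      exact Ideal.mul_mem_mul htpsQ htpf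
    · intro z
      have h2 : tp k H s hs * z ∈ I := by
        refine Irev _ (fun n hn => ?_)
        have hcoe : ((tp k H s hs * z : ssr k H) : PowerSeries k) =
            (X : PowerSeries k) ^ s * (z : PowerSeries k) := rfl
        rw [hcoe] at hn
        obtain ⟨i, hi, j, hj, rfl⟩ := mul_supp (supp_X_pow s)
          (fun j hj => by by_contra hm; exact hj (z.2 j hm)) n hn
        rw [Set.mem_singleton_iff] at hi
        subst hi
        exact hsF j hj
      have heq : tp k H (s + s) (H.add_mem hs hs) * z =
          tp k H s hs * (tp k H s hs * z) := by
        rw [tp_mul' (s + s) s s _ hs hs rfl, mul_assoc]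
      rw [heq]
      exact Ideal.mul_mem_mul htpsQ h2
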